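/- (Cross-block PIC covariance equivalence.) For any two distinct block indices i ≠ j, Σ_{U_i U_j|S} + Φ_{U_i S}^i Σ̈_{SS}^{-1} Φ_{S U_j}^j = Σ_{U_i U_j} − Γ̃_{U_i D} (Γ_{DD} + Λ)^{-1} Γ̃_{D U_j}, where Σ_{U_i U_j|S} := Σ_{U_i U_j} − Γ_{U_i U_j}, Γ̃_{D U_j} is the transpose of Γ̃_{U_j D}, Φ_{S U_j}^j is the transpose of Φ_{U_j S}^j, and Γ_{DD} + Λ is assumed invertible. -/

import Mathlib

open Matrix

lemma rdc {M : ℕ} {D : Fin M → Type} [∀ m, Fintype (D m)] [∀ m, DecidableEq (D m)]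
    {α β : Type} [Fintype α] [Fintype β]
    (g : ∀ m, Matrix α (D m) ℝ) (f : ∀ m, Matrix (D m) (D m) ℝ) (h : ∀ m, Matrix (D m) β ℝ) :
    (Matrix.of fun a d => g d.1 a d.2 : Matrix α ((m : Fin M) × D m) ℝ) * Matrix.blockDiagonal' f *
      (Matrix.of fun (d : (m : Fin M) × D m) b => h d.1 d.2 b)
      = ∑ m, g m * f m * h m := by
  ext a b
  simp only [Matrix.mul_apply, Matrix.sum_apply, Matrix.of_apply, Matrix.blockDiagonal'_apply]
  rw [Finset.sum_sigma', Finset.univ_sigma_univ]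
  refine Finset.sum_congr rfl fun x _ => ?_
  congr 1
  rw [← Finset.univ_sigma_univ, Finset.sum_sigma]
  rw [Finset.sum_eq_single x.fst]
  · rcases x with ⟨m, d⟩
    simp
  · intro m _ hm
    simp [dif_neg hm]
  · simp

lemma sum_split {M : ℕ} {V : Type} [AddCommMonoid V] {i j : Fin M} (hij : i ≠ j)
    (F : Fin M → V) :
    ∑ m, F m = F i + (F j + ∑ m ∈ (Finset.univ.erase i).erase j, F m) := by
  rw [← Finset.add_sum_erase _ F (Finset.mem_univ i)]
  congr 1
  rw [← Finset.add_sum_erase _ F (Finset.mem_erase.mpr ⟨hij.symm, Finset.mem_univ j⟩)]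

theorem stmt_13
    {M : ℕ} (hM : 0 < M)
    {S : Type} [Fintype S] [DecidableEq S]
    {D : Fin M → Type} [∀ m, Fintype (D m)] [∀ m, DecidableEq (D m)]
    (KSS : Matrix S S ℝ) (hKSSsym : KSSᵀ = KSS) (hKSSinv : IsUnit KSS.det)
    (KSD : ∀ m, Matrix S (D m) ℝ)
    (KDD : ∀ m, Matrix (D m) (D m) ℝ) (hKDDsym : ∀ m, (KDD m)ᵀ = KDD m)
    (Q : ∀ m, Matrix (D m) (D m) ℝ)
    (hQ : ∀ m, Q m = KDD m - (KSD m)ᵀ * KSS⁻¹ * KSD m)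
    (hQinv : ∀ m, IsUnit (Q m).det)
    (Λ : Matrix ((m : Fin M) × D m) ((m : Fin M) × D m) ℝ)
    (hΛ : Λ = Matrix.blockDiagonal' Q)
    (KSDf : Matrix S ((m : Fin M) × D m) ℝ)
    (hKSDf : KSDf = Matrix.of fun s d => KSD d.1 s d.2)
    (Kdd : Matrix S S ℝ)
    (hKdd : Kdd = KSS + ∑ m, KSD m * (Q m)⁻¹ * (KSD m)ᵀ)
    (hKddinv : IsUnit Kdd.det)
    {U : Fin M → Type} [∀ m, Fintype (U m)] [∀ m, DecidableEq (U m)]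
    (KUS : ∀ m, Matrix (U m) S ℝ)
    (KUD : ∀ m, Matrix (U m) (D m) ℝ)
    (tΓ : ∀ m, Matrix (U m) ((k : Fin M) × D k) ℝ)
    (htΓ : ∀ m, tΓ m = Matrix.of fun u d =>
      if h : d.1 = m then KUD m u (cast (congrArg D h) d.2)
      else (KUS m * KSS⁻¹ * KSD d.1) u d.2)
    (Φm : ∀ m, Matrix (U m) S ℝ)
    (hΦm : ∀ m, Φm m = KUS m + KUS m * KSS⁻¹ * (KSD m * (Q m)⁻¹ * (KSD m)ᵀ)
      - KUD m * (Q m)⁻¹ * (KSD m)ᵀ)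
    (ΓDD : Matrix ((m : Fin M) × D m) ((m : Fin M) × D m) ℝ)
    (hΓDD : ΓDD = KSDfᵀ * KSS⁻¹ * KSDf)
    (hGLinv : IsUnit (ΓDD + Λ).det)
    (i j : Fin M) (hij : i ≠ j) (KUiUj : Matrix (U i) (U j) ℝ) :
    (KUiUj - KUS i * KSS⁻¹ * (KUS j)ᵀ) + Φm i * Kdd⁻¹ * (Φm j)ᵀ
      = KUiUj - tΓ i * (ΓDD + Λ)⁻¹ * (tΓ j)ᵀ := by
  have hSi : KSS⁻¹ * KSS = 1 := Matrix.nonsing_inv_mul _ hKSSinv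
  have hSi' : KSS * KSS⁻¹ = 1 := Matrix.mul_nonsing_inv _ hKSSinv
  have hDi : Kdd⁻¹ * Kdd = 1 := Matrix.nonsing_inv_mul _ hKddinv
  have hDi' : Kdd * Kdd⁻¹ = 1 := Matrix.mul_nonsing_inv _ hKddinv
  have c1 : ∀ {n : Type} (X : Matrix S n ℝ), Kdd * (Kdd⁻¹ * X) = X := fun X => by
    rw [← Matrix.mul_assoc, hDi', Matrix.one_mul]
  have c2 : ∀ {n : Type} (X : Matrix S n ℝ), Kdd⁻¹ * (Kdd * X) = X := fun X => by
    rw [← Matrix.mul_assoc, hDi, Matrix.one_mul]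
  have c3 : ∀ {n : Type} (X : Matrix S n ℝ), KSS * (KSS⁻¹ * X) = X := fun X => by
    rw [← Matrix.mul_assoc, hSi', Matrix.one_mul]
  have c4 : ∀ {n : Type} (X : Matrix S n ℝ), KSS⁻¹ * (KSS * X) = X := fun X => by
    rw [← Matrix.mul_assoc, hSi, Matrix.one_mul]
  have hSsym : (KSS⁻¹)ᵀ = KSS⁻¹ := by rw [Matrix.transpose_nonsing_inv, hKSSsym]
  have hQsym : ∀ m, (Q m)ᵀ = Q m := fun m => by
    simp [hQ, Matrix.transpose_sub, Matrix.transpose_mul, hKDDsym, hSsym, Matrix.mul_assoc]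
  have hQisym : ∀ m, ((Q m)⁻¹)ᵀ = (Q m)⁻¹ := fun m => by
    rw [Matrix.transpose_nonsing_inv, hQsym]
  set Λi : Matrix ((m : Fin M) × D m) ((m : Fin M) × D m) ℝ :=
    Matrix.blockDiagonal' (fun m => (Q m)⁻¹) with hΛi
  have hΛΛ : Λ * Λi = 1 := by
    rw [hΛ, hΛi, ← Matrix.blockDiagonal'_mul]
    have h1 : (fun k => Q k * (Q k)⁻¹) = fun k => (1 : Matrix (D k) (D k) ℝ) :=
      funext fun k => Matrix.mul_nonsing_inv _ (hQinv k)
    rw [h1]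
    exact Matrix.blockDiagonal'_one
  have cΛ : ∀ {n : Type} (X : Matrix ((m : Fin M) × D m) n ℝ), Λ * (Λi * X) = X := fun X => by
    rw [← Matrix.mul_assoc, hΛΛ, Matrix.one_mul]
  -- representations
  have hAT : KSDfᵀ = Matrix.of fun (d : (m : Fin M) × D m) s => ((fun m => (KSD m)ᵀ) d.1) d.2 s := by
    rw [hKSDf]; ext d s; rfl
  set gi : ∀ k, Matrix (U i) (D k) ℝ := fun k => Matrix.of fun u x =>
    if h : k = i then KUD i u (cast (congrArg D h) x) else (KUS i * KSS⁻¹ * KSD k) u x with hgi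
  set gj : ∀ k, Matrix (U j) (D k) ℝ := fun k => Matrix.of fun u x =>
    if h : k = j then KUD j u (cast (congrArg D h) x) else (KUS j * KSS⁻¹ * KSD k) u x with hgj
  have htΓi : tΓ i = Matrix.of fun u (d : (k : Fin M) × D k) => gi d.1 u d.2 := by
    rw [htΓ i]; ext u d; rcases d with ⟨k, x⟩; simp only [hgi, Matrix.of_apply]
  have htΓjT : (tΓ j)ᵀ = Matrix.of fun (d : (k : Fin M) × D k) u => ((fun k => (gj k)ᵀ) d.1) d.2 u := by
    rw [htΓ j]; ext d u; rcases d with ⟨k, x⟩; simp only [hgj, Matrix.transpose_apply, Matrix.of_apply]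
  have hgii : gi i = KUD i := by
    ext u x; simp [hgi]
  have hgin : ∀ k, k ≠ i → gi k = KUS i * KSS⁻¹ * KSD k := fun k hk => by
    ext u x; simp [hgi, hk]
  have hgjj : gj j = KUD j := by
    ext u x; simp [hgj]
  have hgjn : ∀ k, k ≠ j → gj k = KUS j * KSS⁻¹ * KSD k := fun k hk => by
    ext u x; simp [hgj, hk]
  -- summary products
  have hP : KSDf * Λi * KSDfᵀ = ∑ m, KSD m * (Q m)⁻¹ * (KSD m)ᵀ := by
    rw [hAT, hKSDf, hΛi]; exact rdc KSD (fun m => (Q m)⁻¹) (fun m => (KSD m)ᵀ)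
  have hT1 : tΓ i * Λi * (tΓ j)ᵀ = ∑ m, gi m * (Q m)⁻¹ * (gj m)ᵀ := by
    rw [htΓi, htΓjT, hΛi]; exact rdc gi (fun m => (Q m)⁻¹) (fun k => (gj k)ᵀ)
  have hT2 : tΓ i * Λi * KSDfᵀ = ∑ m, gi m * (Q m)⁻¹ * (KSD m)ᵀ := by
    rw [htΓi, hAT, hΛi]; exact rdc gi (fun m => (Q m)⁻¹) (fun m => (KSD m)ᵀ)
  have hT3 : KSDf * Λi * (tΓ j)ᵀ = ∑ m, KSD m * (Q m)⁻¹ * (gj m)ᵀ := by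
    rw [htΓjT, hKSDf, hΛi]; exact rdc KSD (fun m => (Q m)⁻¹) (fun k => (gj k)ᵀ)
  have hjmem : j ∈ Finset.univ.erase i := Finset.mem_erase.mpr ⟨hij.symm, Finset.mem_univ j⟩
  -- T2 evaluation
  have hT2' : tΓ i * Λi * KSDfᵀ = KUS i * KSS⁻¹ * Kdd - Φm i := by
    have e1 : ∑ k ∈ Finset.univ.erase i, gi k * (Q k)⁻¹ * (KSD k)ᵀ
        = ∑ k ∈ Finset.univ.erase i, KUS i * KSS⁻¹ * (KSD k * (Q k)⁻¹ * (KSD k)ᵀ) := by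
      refine Finset.sum_congr rfl fun k hk => ?_
      rw [hgin k (Finset.ne_of_mem_erase hk)]
      simp [Matrix.mul_assoc]
    rw [hT2, ← Finset.add_sum_erase _ (fun m => gi m * (Q m)⁻¹ * (KSD m)ᵀ) (Finset.mem_univ i),
      e1, ← Matrix.mul_sum, Finset.sum_erase_eq_sub (Finset.mem_univ i), hgii, hKdd, hΦm i]
    simp only [Matrix.mul_add, Matrix.mul_sub, Matrix.add_mul, Matrix.sub_mul, Matrix.mul_assoc,
      hSi, Matrix.mul_one]
    abel
  -- T3 evaluation
  have hT3' : KSDf * Λi * (tΓ j)ᵀ = Kdd * (KSS⁻¹ * (KUS j)ᵀ) - (Φm j)ᵀ := by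
    have e2 : ∑ k ∈ Finset.univ.erase j, KSD k * (Q k)⁻¹ * (gj k)ᵀ
        = ∑ k ∈ Finset.univ.erase j, KSD k * (Q k)⁻¹ * (KSD k)ᵀ * (KSS⁻¹ * (KUS j)ᵀ) := by
      refine Finset.sum_congr rfl fun k hk => ?_
      rw [hgjn k (Finset.ne_of_mem_erase hk)]
      simp [Matrix.transpose_mul, hSsym, Matrix.mul_assoc]
    rw [hT3, ← Finset.add_sum_erase _ (fun m => KSD m * (Q m)⁻¹ * (gj m)ᵀ) (Finset.mem_univ j),
      e2, ← Matrix.sum_mul, Finset.sum_erase_eq_sub (Finset.mem_univ j), hgjj, hKdd, hΦm j]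
    simp only [Matrix.transpose_add, Matrix.transpose_sub, Matrix.transpose_mul,
      Matrix.transpose_transpose, hSsym, hQisym, Matrix.mul_add, Matrix.mul_sub,
      Matrix.add_mul, Matrix.sub_mul, Matrix.mul_assoc, c3]
    abel
  -- T1 evaluation
  have hT1' : tΓ i * Λi * (tΓ j)ᵀ
      = KUD i * ((Q i)⁻¹ * ((KSD i)ᵀ * (KSS⁻¹ * (KUS j)ᵀ)))
        + KUS i * (KSS⁻¹ * (KSD j * ((Q j)⁻¹ * (KUD j)ᵀ)))
        + (KUS i * (KSS⁻¹ * ((∑ m, KSD m * (Q m)⁻¹ * (KSD m)ᵀ) * (KSS⁻¹ * (KUS j)ᵀ)))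
          - KUS i * (KSS⁻¹ * (KSD i * ((Q i)⁻¹ * ((KSD i)ᵀ * (KSS⁻¹ * (KUS j)ᵀ)))))
          - KUS i * (KSS⁻¹ * (KSD j * ((Q j)⁻¹ * ((KSD j)ᵀ * (KSS⁻¹ * (KUS j)ᵀ)))))) := by
    have e3 : ∑ k ∈ (Finset.univ.erase i).erase j, gi k * (Q k)⁻¹ * (gj k)ᵀ
        = ∑ k ∈ (Finset.univ.erase i).erase j,
            KUS i * KSS⁻¹ * (KSD k * (Q k)⁻¹ * (KSD k)ᵀ * (KSS⁻¹ * (KUS j)ᵀ)) := by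
      refine Finset.sum_congr rfl fun k hk => ?_
      have hki : k ≠ i := Finset.ne_of_mem_erase (Finset.mem_of_mem_erase hk)
      have hkj : k ≠ j := Finset.ne_of_mem_erase hk
      rw [hgin k hki, hgjn k hkj]
      simp [Matrix.transpose_mul, hSsym, Matrix.mul_assoc]
    rw [hT1, sum_split hij, hgii, hgin j (Ne.symm hij), hgjj, hgjn i hij, e3,
      ← Matrix.mul_sum, ← Matrix.sum_mul,
      Finset.sum_erase_eq_sub hjmem, Finset.sum_erase_eq_sub (Finset.mem_univ i)]
    simp only [Matrix.transpose_mul, hSsym, Matrix.mul_add, Matrix.mul_sub,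
      Matrix.add_mul, Matrix.sub_mul, Matrix.mul_assoc]
    abel
  -- Woodbury
  have cAΛA : ∀ {n : Type} (X : Matrix S n ℝ), KSDf * (Λi * (KSDfᵀ * X)) = Kdd * X - KSS * X := by
    intro n X
    have h5 : KSDf * Λi * KSDfᵀ = Kdd - KSS := by
      rw [hP, hKdd]; abel
    calc KSDf * (Λi * (KSDfᵀ * X)) = KSDf * Λi * KSDfᵀ * X := by
          simp [Matrix.mul_assoc]
      _ = Kdd * X - KSS * X := by rw [h5, Matrix.sub_mul]
  have hW : (ΓDD + Λ)⁻¹ = Λi - Λi * KSDfᵀ * Kdd⁻¹ * (KSDf * Λi) := by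
    apply Matrix.inv_eq_right_inv
    rw [hΓDD]
    simp only [Matrix.add_mul, Matrix.mul_sub, Matrix.sub_mul, Matrix.mul_assoc,
      hΛΛ, cΛ, cAΛA, c1, c4]
    abel
  have key : tΓ i * (ΓDD + Λ)⁻¹ * (tΓ j)ᵀ
      = tΓ i * Λi * (tΓ j)ᵀ - (tΓ i * Λi * KSDfᵀ) * Kdd⁻¹ * (KSDf * Λi * (tΓ j)ᵀ) := by
    rw [hW]
    simp only [Matrix.mul_sub, Matrix.sub_mul, Matrix.mul_assoc]
  rw [key, hT1', hT2', hT3']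
  simp only [Matrix.mul_sub, Matrix.sub_mul, Matrix.mul_add, Matrix.add_mul, Matrix.mul_assoc,
    c1, c2]
  simp only [hΦm, hKdd, Matrix.transpose_add, Matrix.transpose_sub, Matrix.transpose_mul,
    Matrix.transpose_transpose, hSsym, hQisym, Matrix.mul_sub, Matrix.sub_mul,
    Matrix.mul_add, Matrix.add_mul, Matrix.mul_assoc, c3, c4]
  abel
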